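/- Under the assumptions that each stochastic gradient g_j(x_j) has variance bounded by M + M_V‖∇F(x_j)‖², that ‖x_i - x_j‖ ≤ D for all i, j, that ∇F is L-Lipschitz, and that the stepsizes satisfy 0 < α_j ≤ α_0, the variance of v_k = -∑_{j=1}^{k} α_j γ^{k-j} g_j(x_j) (with independent gradient noise across iterations) satisfies Var[v_k] ≤ (1/(1-γ²)) α_0² (M + 2 M_V ‖∇F(x_k)‖² + 2 M_V L² D²). -/

import Mathlib

lemma geom_tail_sum_le {r : ℝ} (h0 : 0 ≤ r) (h1 : r < 1) (k : ℕ) :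
    ∑ j ∈ Finset.Icc 1 k, r ^ (k - j) ≤ 1 / (1 - r) := by
  have heq : ∑ j ∈ Finset.Icc 1 k, r ^ (k - j) = ∑ i ∈ Finset.range k, r ^ i := by
    rw [← Finset.Ico_add_one_right_eq_Icc, Finset.sum_Ico_eq_sum_range]
    simp only [Nat.add_sub_cancel]
    rw [← Finset.sum_range_reflect (fun i => r ^ i) k]
    apply Finset.sum_congr rfl
    intro i hi
    congr 1
    simp at hi
    omega
  have h1r : 0 < 1 - r := by linarith
  have heq2 : (∑ i ∈ Finset.range k, r ^ i) = (1 - r ^ k) / (1 - r) := by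
    rw [geom_sum_eq (by linarith), div_eq_div_iff (by linarith) (by linarith)]
    ring
  rw [heq, heq2]
  have hrk : 0 ≤ r ^ k := pow_nonneg h0 k
  gcongr
  have hrk : 0 ≤ r ^ k := pow_nonneg h0 k
  nlinarith
/-- Variance bound for the momentum direction with a fixed exponential decay factor
`γ ∈ (0,1)` (Theorem 2 of the paper).  `V j` denotes the variance of the stochastic
gradient `g_j(x_j)`; independence across iterations is encoded by the hypothesis
`hVar`, stating `Var[v_k] = ∑_j (α_j γ^{k-j})² Var[g_j]`. -/
theorem variance_bound_exponential {d : ℕ} (F : EuclideanSpace ℝ (Fin d) → ℝ)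
    (L γ M MV D α₀ : ℝ) (x : ℕ → EuclideanSpace ℝ (Fin d)) (α V Varv : ℕ → ℝ) (k : ℕ)
    (hL : 0 ≤ L) (hγ : γ ∈ Set.Ioo (0 : ℝ) 1) (hM : 0 ≤ M) (hMV : 0 ≤ MV)
    (hdiff : Differentiable ℝ F)
    (hlip : ∀ x y : EuclideanSpace ℝ (Fin d),
      ‖gradient F x - gradient F y‖ ≤ L * ‖x - y‖)
    (hVnonneg : ∀ j, 0 ≤ V j)
    (hV : ∀ j, V j ≤ M + MV * ‖gradient F (x j)‖ ^ 2)
    (hD : ∀ i j, ‖x i - x j‖ ≤ D)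
    (hα : ∀ j, 0 < α j ∧ α j ≤ α₀)
    (hVar : Varv k = ∑ j ∈ Finset.Icc 1 k, (α j * γ ^ (k - j)) ^ 2 * V j) :
    Varv k ≤ 1 / (1 - γ ^ 2) * α₀ ^ 2 *
      (M + 2 * MV * ‖gradient F (x k)‖ ^ 2 + 2 * MV * L ^ 2 * D ^ 2) := by
  obtain ⟨hγ0, hγ1⟩ := hγ
  set C := M + 2 * MV * ‖gradient F (x k)‖ ^ 2 + 2 * MV * L ^ 2 * D ^ 2 with hC
  have hD0 : 0 ≤ D := le_trans (norm_nonneg _) (hD 0 0)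
  have hα0 : 0 < α₀ := lt_of_lt_of_le (hα 0).1 (hα 0).2
  have hC0 : 0 ≤ C := by positivity
  have hterm : ∀ j ∈ Finset.Icc 1 k,
      (α j * γ ^ (k - j)) ^ 2 * V j ≤ α₀ ^ 2 * C * (γ ^ 2) ^ (k - j) := by
    intro j _
    have hVj : V j ≤ C := by
      have h1 : ‖gradient F (x j) - gradient F (x k)‖ ≤ L * D := by
        calc ‖gradient F (x j) - gradient F (x k)‖ ≤ L * ‖x j - x k‖ := hlip _ _
          _ ≤ L * D := by
            exact mul_le_mul_of_nonneg_left (hD j k) hL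
      have h2 : ‖gradient F (x j)‖ ≤ ‖gradient F (x k)‖ + L * D := by
        calc ‖gradient F (x j)‖
            ≤ ‖gradient F (x k)‖ + ‖gradient F (x j) - gradient F (x k)‖ := by
              have := norm_sub_norm_le (gradient F (x j)) (gradient F (x k))
              linarith
          _ ≤ ‖gradient F (x k)‖ + L * D := by linarith
      have h3 : ‖gradient F (x j)‖ ^ 2 ≤ 2 * ‖gradient F (x k)‖ ^ 2 + 2 * (L * D) ^ 2 := by
        have := mul_self_le_mul_self (norm_nonneg (gradient F (x j))) h2
        nlinarith [sq_nonneg (‖gradient F (x k)‖ - L * D)]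
      calc V j ≤ M + MV * ‖gradient F (x j)‖ ^ 2 := hV j
        _ ≤ C := by rw [hC]; nlinarith
    have hαj : (α j) ^ 2 ≤ α₀ ^ 2 := by
      have := (hα j).1; have := (hα j).2; nlinarith
    have hg : (γ ^ (k - j)) ^ 2 = (γ ^ 2) ^ (k - j) := by ring
    have hgn : 0 ≤ (γ ^ 2) ^ (k - j) := by positivity
    calc (α j * γ ^ (k - j)) ^ 2 * V j
        = (α j) ^ 2 * (γ ^ 2) ^ (k - j) * V j := by rw [← hg]; ring
      _ ≤ α₀ ^ 2 * (γ ^ 2) ^ (k - j) * C := by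
          apply mul_le_mul (mul_le_mul_of_nonneg_right hαj hgn) hVj (hVnonneg j)
          positivity
      _ = α₀ ^ 2 * C * (γ ^ 2) ^ (k - j) := by ring
  have hsum : ∑ j ∈ Finset.Icc 1 k, (γ ^ 2) ^ (k - j) ≤ 1 / (1 - γ ^ 2) :=
    geom_tail_sum_le (by positivity) (by nlinarith) k
  calc Varv k = ∑ j ∈ Finset.Icc 1 k, (α j * γ ^ (k - j)) ^ 2 * V j := hVar
    _ ≤ ∑ j ∈ Finset.Icc 1 k, α₀ ^ 2 * C * (γ ^ 2) ^ (k - j) := Finset.sum_le_sum hterm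
    _ = α₀ ^ 2 * C * ∑ j ∈ Finset.Icc 1 k, (γ ^ 2) ^ (k - j) := by
        rw [Finset.mul_sum]
    _ ≤ α₀ ^ 2 * C * (1 / (1 - γ ^ 2)) := by
        apply mul_le_mul_of_nonneg_left hsum; positivity
    _ = 1 / (1 - γ ^ 2) * α₀ ^ 2 * C := by ring
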